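/- Let T be a complete binary tree with n leaves, let Π be a bijection from the leaf set to the internal node multiset (root counted twice), and for S ⊆ L(V_T) let Q = S ∪ Π(S). If X is a maximal S-occupied subtree for a nonempty S ⊆ L(V_T), then |(∂Q) ∩ V_X| ≥ |V_X \ Q| / 2, i.e., at least half of the nodes of X not in Q lie in the node boundary of Q. -/

import Mathlib

/-- Vertices of the complete binary tree of height `h`: lists of booleans of
length at most `h`, recorded from the vertex up to the root (so the root is `[]`,
and a child of `v` is `b :: v` for a bit `b`). The depth of a vertex is the
length of its list. -/
def CBTVert (h : ℕ) : Type := {l : List Bool // l.length ≤ h}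

/-- The complete binary tree of height `h` as a simple graph: `u` and `v` are
adjacent iff one is a child of the other. -/
def cbt (h : ℕ) : SimpleGraph (CBTVert h) where
  Adj u v := (∃ b, u.1 = b :: v.1) ∨ (∃ b, v.1 = b :: u.1)
  symm := ⟨by intro u v hv; tauto⟩
  loopless := ⟨by
    rintro u (⟨b, hb⟩ | ⟨b, hb⟩) <;>
      simpa using congrArg List.length hb⟩

/-- The node boundary of a set `S`: vertices outside `S` adjacent to some vertex of `S`. -/
def nbd {V : Type*} (G : SimpleGraph V) (S : Set V) : Set V :=
  {v | v ∉ S ∧ ∃ u ∈ S, G.Adj u v}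

/-- Leaves are the vertices of maximal depth (the tree is complete). -/
def isLeaf {h : ℕ} (v : CBTVert h) : Prop := v.1.length = h

/-- Internal nodes are the non-leaf vertices. -/
def isInternal {h : ℕ} (v : CBTVert h) : Prop := v.1.length < h

/-- The root of the complete binary tree. -/
def root (h : ℕ) : CBTVert h := ⟨[], by simp⟩

/-- `desc x v` means `v` belongs to the subtree rooted at `x`
(`x`'s list is a suffix of `v`'s list). -/
def desc {h : ℕ} (x v : CBTVert h) : Prop := x.1 <:+ v.1

/-- The subtree rooted at `x` is `S`-occupied if all its leaves belong to `S`. -/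
def occupied {h : ℕ} (S : Set (CBTVert h)) (x : CBTVert h) : Prop :=
  ∀ v : CBTVert h, desc x v → isLeaf v → v ∈ S

/-- The subtree rooted at `x` is a maximal `S`-occupied subtree. -/
def maxOccupied {h : ℕ} (S : Set (CBTVert h)) (x : CBTVert h) : Prop :=
  occupied S x ∧ ∀ y, desc y x → occupied S y → y = x

/-- Leaf nodes of the complete binary tree of height h. -/
def Leaf (h : ℕ) : Type := {v : CBTVert h // isLeaf v}

/-- Internal-node slots: each internal node is one slot, with one extra slot
for a duplicate copy of the root (so there are as many slots as leaves). -/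
def Slot (h : ℕ) : Type := {v : CBTVert h // isInternal v} ⊕ Unit

/-- The tree vertex corresponding to a slot (the extra slot is the root). -/
def slotVert {h : ℕ} : Slot h → CBTVert h := Sum.elim Subtype.val (fun _ => root h)

/-- Q = S ∪ Π(S), as a set of tree vertices. -/
def Qset {h : ℕ} (π : Leaf h ≃ Slot h) (S : Set (Leaf h)) : Set (CBTVert h) :=
  (Subtype.val '' S) ∪ ((fun u => slotVert (π u)) '' S)

/-- The contracted graph G_Π on leaf nodes: two distinct leaves are adjacent
iff some tree edge joins a member of one pair {v, Π(v)} to a member of the other. -/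
def Gpi {h : ℕ} (π : Leaf h ≃ Slot h) : SimpleGraph (Leaf h) where
  Adj u v := u ≠ v ∧ ∃ a b : CBTVert h, (cbt h).Adj a b ∧
      (a = u.1 ∨ a = slotVert (π u)) ∧ (b = v.1 ∨ b = slotVert (π v))
  symm := ⟨by
    rintro u v ⟨huv, a, b, hab, ha, hb⟩
    exact ⟨huv.symm, b, a, hab.symm, hb, ha⟩⟩
  loopless := ⟨fun u hu => hu.1 rfl⟩

/-- The node expansion of a graph: the infimum of |∂S|/|S| over nonempty
vertex sets S with |S| ≤ n/2. -/
noncomputable def nodeExpansion {V : Type*} (G : SimpleGraph V) : ℝ :=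
  sInf {r : ℝ | ∃ S : Set V, S.Nonempty ∧ 2 * S.ncard ≤ Nat.card V ∧
    r = (nbd G S).ncard / S.ncard}

/-- Lemma 3: if X is a maximal S-occupied subtree (rooted at x) for a nonempty
set S of leaves, then at least half of the vertices of X outside Q = S ∪ Π(S)
lie in the node boundary of Q. -/
theorem stmt3 (h : ℕ) (π : Leaf h ≃ Slot h) (S : Set (Leaf h)) (hS : S.Nonempty)
    (x : CBTVert h) (hx : maxOccupied (Subtype.val '' S) x) :
    ((nbd (cbt h) (Qset π S) ∩ {v | desc x v}).ncard : ℝ) ≥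
      (({v | desc x v} \ Qset π S).ncard : ℝ) / 2 := by
  classical
  have hfin : Finite (CBTVert h) := by
    have : {l : List Bool | l.length ≤ h}.Finite := List.finite_length_le Bool h
    exact this.to_subtype
  set Q := Qset π S with hQ
  set D : Set (CBTVert h) := {v | desc x v} with hD
  set A : Set (CBTVert h) := nbd (cbt h) Q ∩ D with hA
  set B : Set (CBTVert h) := D \ Q with hB
  -- every element of B is internal
  have hint : ∀ v ∈ B, v.1.length < h := by
    intro v hv
    rcases lt_or_eq_of_le v.2 with hlt | heq
    · exact hlt
    · exfalso
      have hvS : v ∈ Subtype.val '' S := hx.1 v hv.1 heq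
      exact hv.2 (Or.inl hvS)
  -- the child function
  have hchild : ∀ (v : CBTVert h), v ∈ B → v ∉ A → ∀ b : Bool,
      ∀ (hl : (b :: v.1).length ≤ h), (⟨b :: v.1, hl⟩ : CBTVert h) ∈ B := by
    intro v hvB hvA b hl
    have hlen := hint v hvB
    set c : CBTVert h := ⟨b :: v.1, hl⟩ with hc
    have hadj : (cbt h).Adj c v := Or.inl ⟨b, rfl⟩
    constructor
    · -- desc x c
      exact hvB.1.trans (List.suffix_cons b v.1)
    · -- c ∉ Q
      intro hcQ
      apply hvA
      refine ⟨⟨hvB.2, c, hcQ, hadj⟩, hvB.1⟩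
  have hAB : A ⊆ B := fun v hv => ⟨hv.2, hv.1.1⟩
  set C : Set (CBTVert h) := B \ A with hC
  have hBfin : B.Finite := Set.toFinite B
  have hsum : C.ncard + A.ncard = B.ncard :=
    Set.ncard_diff_add_ncard_of_subset hAB hBfin
  -- two disjoint injections C → B
  have key : 2 * C.ncard ≤ B.ncard := by
    set f : Bool → CBTVert h → CBTVert h := fun b v =>
      if hvl : v.1.length < h then ⟨b :: v.1, by simp; omega⟩ else v with hf
    have hfmem : ∀ b : Bool, ∀ v ∈ C, f b v ∈ B := by
      intro b v hv
      have hlen := hint v hv.1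
      simp only [hf, hlen, ↓reduceDIte]
      exact hchild v hv.1 hv.2 b _
    have hfinj : ∀ b : Bool, Set.InjOn (f b) C := by
      intro b v hv w hw hvw
      have hlv := hint v hv.1
      have hlw := hint w hw.1
      simp only [hf, hlv, hlw, ↓reduceDIte] at hvw
      have h2 : b :: v.1 = b :: w.1 := congrArg Subtype.val hvw
      exact Subtype.ext (List.cons_injective h2)
    have hdisj : Disjoint (f false '' C) (f true '' C) := by
      rw [Set.disjoint_left]
      rintro a ⟨v, hv, rfl⟩ ⟨w, hw, hfw⟩
      have hlv := hint v hv.1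
      have hlw := hint w hw.1
      simp only [hf, hlv, hlw, ↓reduceDIte] at hfw
      have h2 : (true : Bool) :: w.1 = false :: v.1 := congrArg Subtype.val hfw
      simp at h2
    have hsub : (f false '' C) ∪ (f true '' C) ⊆ B := by
      rintro a (⟨v, hv, rfl⟩ | ⟨v, hv, rfl⟩)
      exacts [hfmem false v hv, hfmem true v hv]
    calc 2 * C.ncard = (f false '' C).ncard + (f true '' C).ncard := by
          rw [Set.ncard_image_of_injOn (hfinj false),
            Set.ncard_image_of_injOn (hfinj true)]; ring
      _ = ((f false '' C) ∪ (f true '' C)).ncard :=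
          (Set.ncard_union_eq hdisj (Set.toFinite _) (Set.toFinite _)).symm
      _ ≤ B.ncard := Set.ncard_le_ncard hsub hBfin
  have hmain : B.ncard ≤ 2 * A.ncard := by omega
  have : (B.ncard : ℝ) ≤ 2 * (A.ncard : ℝ) := by exact_mod_cast hmain
  linarith
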